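/- Fix integers b ≥ 2 and m ≥ 2 and a real ε with 0 < ε ≤ (b^m − 1)·(b−1)/(b^m + b − 2) (in particular, for all sufficiently small ε > 0). Then (1 + ε/(b^m − 1 − ε))^{b−1} < 1 + ε, i.e., ((b^m − 1)/(b^m − 1 − ε))^{b−1} < 1 + ε. -/

import Mathlib

/-- For integers `b ≥ 2`, `m ≥ 2`, and `0 < ε ≤ (b^m − 1)(b − 1)/(b^m + b − 2)`,
one has `(1 + ε/(b^m − 1 − ε))^(b−1) < 1 + ε`, equivalently
`((b^m − 1)/(b^m − 1 − ε))^(b−1) < 1 + ε`. -/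
theorem bootstrap_growth_inequality (b m : ℕ) (hb : 2 ≤ b) (hm : 2 ≤ m) (ε : ℝ)
    (hε0 : 0 < ε)
    (hεub : ε ≤ ((b : ℝ) ^ m - 1) * ((b : ℝ) - 1) / ((b : ℝ) ^ m + (b : ℝ) - 2)) :
    (1 + ε / ((b : ℝ) ^ m - 1 - ε)) ^ (b - 1) < 1 + ε ∧
    (((b : ℝ) ^ m - 1) / ((b : ℝ) ^ m - 1 - ε)) ^ (b - 1) < 1 + ε := by
  have hb2 : (2:ℝ) ≤ (b:ℝ) := by exact_mod_cast hb
  set B : ℝ := (b:ℝ)^m - 1 with hBdef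
  have hbm : (b:ℝ)^2 ≤ (b:ℝ)^m := pow_le_pow_right₀ (by linarith) hm
  have hB3 : (3:ℝ) ≤ B := by nlinarith
  have hBpos : 0 < B := by linarith
  have hBb : 0 < B + (b:ℝ) - 1 := by linarith
  have hεub' : ε * (B + (b:ℝ) - 1) ≤ B * ((b:ℝ) - 1) := by
    have h2 : (b:ℝ)^m + (b:ℝ) - 2 = B + (b:ℝ) - 1 := by rw [hBdef]; ring
    rw [h2] at hεub
    exact (le_div_iff₀ hBb).mp hεub
  -- key inequality: (b-1)(1+ε) < B
  have hpoly : B * ((b:ℝ)-1)^2 < (B - ((b:ℝ)-1)) * (B + (b:ℝ) - 1) := by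
    nlinarith [sq_nonneg ((b:ℝ)-1), sq_nonneg (B - ((b:ℝ)^2-1)), sq_nonneg ((b:ℝ)-2)]
  have hkey : ((b:ℝ)-1) * (1+ε) < B := by
    nlinarith [mul_le_mul_of_nonneg_left hεub' (show (0:ℝ) ≤ (b:ℝ)-1 by linarith)]
  have hεB : ε < B := by nlinarith
  have hBε : 0 < B - ε := by linarith
  set t : ℝ := ε / B with htdef
  have ht0 : 0 < t := div_pos hε0 hBpos
  have ht1 : t < 1 := (div_lt_one hBpos).mpr (by linarith)
  have hn : ((b - 1 : ℕ) : ℝ) = (b:ℝ) - 1 := by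
    have h1 : 1 ≤ b := by omega
    push_cast [Nat.cast_sub h1]
    ring
  have hbern : 1 - ((b:ℝ)-1) * t ≤ (1 - t)^(b-1) := by
    have h := one_add_mul_le_pow (a := -t) (by linarith) (b-1)
    rw [hn] at h
    have e1 : 1 + ((b:ℝ)-1) * (-t) = 1 - ((b:ℝ)-1) * t := by ring
    have e2 : (1 + -t) = 1 - t := by ring
    rwa [e1, e2] at h
  have hq : ((b:ℝ)-1) * t * B = ((b:ℝ)-1) * ε := by
    rw [htdef]; field_simp
  have hstep : 1 < (1+ε) * (1 - ((b:ℝ)-1)*t) := by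
    have hpos : 0 < ε * (B - ((b:ℝ)-1)*(1+ε)) := mul_pos hε0 (by linarith)
    nlinarith [hq, hBpos, hpos]
  have hpow_pos : 0 < (1-t)^(b-1) := pow_pos (by linarith) _
  have hmain : 1 < (1+ε) * (1-t)^(b-1) :=
    hstep.trans_le (mul_le_mul_of_nonneg_left hbern (by linarith))
  have h1t : (1 - t) = (B-ε)/B := by
    rw [htdef]; field_simp
  have hprod : (B/(B-ε))^(b-1) * ((B-ε)/B)^(b-1) = 1 := by
    rw [← mul_pow]
    have : B/(B-ε) * ((B-ε)/B) = 1 := by field_simp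
    rw [this, one_pow]
  have hp2 : 0 < ((B-ε)/B)^(b-1) := pow_pos (div_pos hBε hBpos) _
  have hfinal : (B/(B-ε))^(b-1) < 1+ε := by
    have h' : (B/(B-ε))^(b-1) * ((B-ε)/B)^(b-1) < (1+ε) * ((B-ε)/B)^(b-1) := by
      rw [hprod, ← h1t]; exact hmain
    exact lt_of_mul_lt_mul_right h' hp2.le
  have heq : 1 + ε/(B-ε) = B/(B-ε) := by field_simp; ring
  exact ⟨by rw [heq]; exact hfinal, hfinal⟩
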